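/- Let α be a real number with α > −1 and define m_n = (n−1)/(2n+α+1) for n ≥ 1. Then m_1 = 0 and, for every n ≥ 2: (1 − m_{n−1})·m_n = (n−1)(n+α+1)/((2n+α+1)(2n+α−1)), and 0 < m_n < 1/2. -/

import Mathlib

/-- `m_n = (n-1)/(2n+α+1)` is the minimal parameter sequence of the chain
sequence `s_n = (n-1)(n+α+1)/((2n+α+1)(2n+α-1))` coming from the quasi-Christoffel
Laguerre polynomials at `x = 0`, and `0 < m_n < 1/2` for `n ≥ 2`. -/
theorem quasiChristoffel_laguerre_chain_sequence
    (α : ℝ) (hα : -1 < α) (m : ℕ → ℝ)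
    (hm : ∀ n : ℕ, 1 ≤ n → m n = ((n : ℝ) - 1) / (2 * (n : ℝ) + α + 1)) :
    m 1 = 0 ∧
    ∀ n : ℕ, 2 ≤ n →
      (1 - m (n - 1)) * m n =
        ((n : ℝ) - 1) * ((n : ℝ) + α + 1) /
          ((2 * (n : ℝ) + α + 1) * (2 * (n : ℝ) + α - 1)) ∧
      0 < m n ∧ m n < 1 / 2 := by
  constructor
  · rw [hm 1 le_rfl]; norm_num
  · intro n hn
    have hn2 : (2 : ℝ) ≤ (n : ℝ) := by exact_mod_cast hn
    have h1 : (0 : ℝ) < 2 * (n : ℝ) + α + 1 := by linarith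
    have h2 : (0 : ℝ) < 2 * (n : ℝ) + α - 1 := by linarith
    have hcast : ((n - 1 : ℕ) : ℝ) = (n : ℝ) - 1 := by
      have : 1 ≤ n := by omega
      push_cast [this]; ring
    have hmn := hm n (by omega)
    have hmn1 := hm (n - 1) (by omega)
    rw [hcast] at hmn1
    refine ⟨?_, ?_, ?_⟩
    · rw [hmn, hmn1]
      have h3 : (2 : ℝ) * ((n : ℝ) - 1) + α + 1 ≠ 0 := by linarith
      have h4 : (2 : ℝ) * (n : ℝ) + α + 1 ≠ 0 := by linarith
      have h5 : (2 : ℝ) * (n : ℝ) + α - 1 ≠ 0 := by linarith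
      rw [show (2 : ℝ) * ((n : ℝ) - 1) + α + 1 = 2 * (n : ℝ) + α - 1 by ring, one_sub_div h5,
        div_mul_div_comm, div_eq_div_iff (mul_ne_zero h5 h4) (mul_ne_zero h4 h5)]
      ring
    · rw [hmn]
      exact div_pos (by linarith) h1
    · rw [hmn, div_lt_iff₀ h1]
      linarith
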